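/- Let r ≥ 2 and d ≥ 1 be integers and let d_1, …, d_r be nonnegative integers with d_1 + ⋯ + d_r = (r−1)d and ⌊d/2⌋ ≤ d_i ≤ d for all i. Then there exists a colorful partition of {1, 2, …, (r−1)(d+1)+1} into r parts X_1, …, X_r with |X_i| = d_i + 1 for all i; that is, a partition such that for every k with 1 ≤ k ≤ d+1 the set Y_k = {(r−1)(k−1)+1, (r−1)(k−1)+2, …, (r−1)k+1} satisfies |Y_k ∩ X_i| = 1 for all i ∈ {1, …, r}. -/

import Mathlib

namespace ColorfulAux

def skip2 (a b j : ℕ) : ℕ :=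
  if j < min a b then j else if j + 1 < max a b then j + 1 else j + 2

lemma skip2_lt {r a b j : ℕ} (hj : j + 2 < r) : skip2 a b j < r := by
  unfold skip2; split_ifs <;> omega

lemma skip2_ne_left {a b j : ℕ} : skip2 a b j ≠ a := by unfold skip2; split_ifs <;> omega

lemma skip2_ne_right {a b j : ℕ} : skip2 a b j ≠ b := by unfold skip2; split_ifs <;> omega

lemma skip2_strictMono {a b j j' : ℕ} (h : j < j') : skip2 a b j < skip2 a b j' := by
  unfold skip2; split_ifs <;> omega

def fval (e : ℕ) (c : ℕ → ℕ) (x : ℕ) : ℕ :=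
  if (x - 1) % e = 0 then c ((x - 1) / e)
  else skip2 (c ((x - 1) / e)) (c ((x - 1) / e + 1)) ((x - 1) % e - 1)

lemma fval_eq (e : ℕ) (he : 1 ≤ e) (c : ℕ → ℕ) (k s : ℕ) (hs : s ≤ e) :
    fval e c (e * k + 1 + s) =
      if s = 0 then c k else if s = e then c (k + 1)
      else skip2 (c k) (c (k + 1)) (s - 1) := by
  have h1 : e * k + 1 + s - 1 = e * k + s := by omega
  have hmod : (e * k + s) % e = s % e := Nat.mul_add_mod e k s
  have hdiv : (e * k + s) / e = k + s / e := Nat.mul_add_div (by omega) k s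
  rw [fval, h1, hdiv, hmod]
  by_cases hse : s = e
  · have hm2 : s % e = 0 := by rw [hse]; exact Nat.mod_self e
    have hd2 : s / e = 1 := by rw [hse]; exact Nat.div_self (by omega)
    rw [hm2, hd2, if_pos rfl, if_neg (by omega), if_pos hse]
  · have hlt : s < e := by omega
    rw [Nat.mod_eq_of_lt hlt, Nat.div_eq_of_lt hlt, add_zero]
    by_cases h0 : s = 0
    · rw [if_pos h0, if_pos h0]
    · rw [if_neg h0, if_neg h0, if_neg hse]

lemma block_filter_card (e d r : ℕ) (he : 1 ≤ e) (hre : r = e + 1) (c : ℕ → ℕ)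
    (hc1 : ∀ k ≤ d + 1, c k < r) (hc2 : ∀ k ≤ d, c k ≠ c (k + 1))
    (k : ℕ) (hk1 : 1 ≤ k) (hk2 : k ≤ d + 1) (i : ℕ) (hi : i < r) :
    ((Finset.Icc (e * (k - 1) + 1) (e * k + 1)).filter
      (fun x => fval e c x = i)).card = 1 := by
  set Y := Finset.Icc (e * (k - 1) + 1) (e * k + 1) with hY
  have hk' : k - 1 + 1 = k := by omega
  have hek : e * (k - 1) + e = e * k := by
    have h := mul_add_one e (k - 1)
    rw [hk'] at h
    omega
  have hmem : ∀ x ∈ Y, ∃ s, s ≤ e ∧ x = e * (k - 1) + 1 + s := by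
    intro x hx
    rw [hY, Finset.mem_Icc] at hx
    exact ⟨x - (e * (k - 1) + 1), by omega, by omega⟩
  have ha : c (k - 1) < r := hc1 _ (by omega)
  have hb : c k < r := hc1 _ (by omega)
  have hab : c (k - 1) ≠ c k := by
    have := hc2 (k - 1) (by omega); rwa [hk'] at this
  have hfv : ∀ s, s ≤ e → fval e c (e * (k - 1) + 1 + s) =
      if s = 0 then c (k - 1) else if s = e then c k
      else skip2 (c (k - 1)) (c k) (s - 1) := by
    intro s hs
    rw [fval_eq e he c (k - 1) s hs, hk']
  have hvlt : ∀ s, s ≤ e → fval e c (e * (k - 1) + 1 + s) < r := by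
    intro s hs
    rw [hfv s hs]
    split_ifs with h0 h1
    · exact ha
    · exact hb
    · exact skip2_lt (by omega)
  have hinj : Set.InjOn (fval e c) Y := by
    intro x hx y hy hxy
    obtain ⟨s, hs, rfl⟩ := hmem x hx
    obtain ⟨s', hs', rfl⟩ := hmem y hy
    rw [hfv s hs, hfv s' hs'] at hxy
    have hss : s = s' := by
      split_ifs at hxy with a1 a2 a3 a4 a5 a6 a7
      all_goals first
      | omega
      | (exact absurd hxy hab)
      | (exact absurd hxy.symm hab)
      | (exact absurd hxy.symm skip2_ne_left)
      | (exact absurd hxy.symm skip2_ne_right)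
      | (exact absurd hxy skip2_ne_left)
      | (exact absurd hxy skip2_ne_right)
      | (rcases lt_trichotomy s s' with h | h | h
         · exact absurd hxy (Nat.ne_of_lt (skip2_strictMono (by omega)))
         · exact h
         · exact absurd hxy.symm (Nat.ne_of_lt (skip2_strictMono (by omega))))
    rw [hss]
  have hYcard : Y.card = r := by
    rw [hY, Nat.card_Icc]; omega
  have himg : Y.image (fval e c) = Finset.range r := by
    apply Finset.eq_of_subset_of_card_le
    · intro v hv
      rw [Finset.mem_image] at hv
      obtain ⟨x, hx, rfl⟩ := hv
      obtain ⟨s, hs, rfl⟩ := hmem x hx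
      exact Finset.mem_range.mpr (hvlt s hs)
    · rw [Finset.card_image_of_injOn hinj, hYcard, Finset.card_range]
  have hfib : ∀ b ∈ Finset.range r, 1 ≤ (Y.filter (fun x => fval e c x = b)).card := by
    intro b hb
    rw [← himg, Finset.mem_image] at hb
    obtain ⟨x, hx, rfl⟩ := hb
    exact Finset.card_pos.mpr ⟨x, Finset.mem_filter.mpr ⟨hx, rfl⟩⟩
  have hsum : ∑ b ∈ Finset.range r, (Y.filter (fun x => fval e c x = b)).card = r := by
    rw [← Finset.card_eq_sum_card_fiberwise (fun x hx => by
      rw [← himg]; exact Finset.mem_image_of_mem _ hx)]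
    exact hYcard
  by_contra hne
  have h2 : 2 ≤ (Y.filter (fun x => fval e c x = i)).card := by
    have := hfib i (Finset.mem_range.mpr hi); omega
  have : ∑ b ∈ Finset.range r, 1 < ∑ b ∈ Finset.range r,
      (Y.filter (fun x => fval e c x = b)).card :=
    Finset.sum_lt_sum hfib ⟨i, Finset.mem_range.mpr hi, by omega⟩
  simp only [Finset.sum_const, Finset.card_range, smul_eq_mul, mul_one] at this
  omega


lemma count_aux (l : List ℕ) (x : ℕ) :
    (∑ k ∈ Finset.range l.length, if l.getD k 0 = x then 1 else 0) = l.count x := by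
  induction l with
  | nil => simp
  | cons a t ih =>
    rw [List.length_cons, Finset.sum_range_succ']
    simp only [List.getD_cons_succ, List.getD_cons_zero]
    rw [ih]
    simp only [List.count_cons]
    by_cases h : a = x
    · simp [h]
    · simp [h, Ne.symm h]

lemma total_filter_card (e d r : ℕ) (he : 1 ≤ e) (hre : r = e + 1) (c : ℕ → ℕ)
    (hc1 : ∀ k ≤ d + 1, c k < r) (hc2 : ∀ k ≤ d, c k ≠ c (k + 1))
    (i : ℕ) (hi : i < r) :
    ((Finset.Icc 1 (e * (d + 1) + 1)).filter (fun x => fval e c x = i)).card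
      + (∑ k ∈ Finset.range (d + 1), if c k = i then 1 else 0)
      = (d + 1) + (if c 0 = i then 1 else 0) := by
  suffices H : ∀ K, K ≤ d + 1 →
      ((Finset.Icc 1 (e * K + 1)).filter (fun x => fval e c x = i)).card
        + (∑ k ∈ Finset.range K, if c k = i then 1 else 0)
        = K + (if c 0 = i then 1 else 0) by
    exact H (d + 1) le_rfl
  intro K
  induction K with
  | zero =>
    intro _
    have h1 : fval e c 1 = c 0 := by
      have := fval_eq e he c 0 0 (by omega)
      simpa using this
    have h2 : Finset.Icc 1 (e * 0 + 1) = {1} := by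
      rw [mul_zero, zero_add, Finset.Icc_self]
    rw [h2]
    simp [Finset.filter_singleton, h1]
    by_cases h : c 0 = i <;> simp [h]
  | succ K ih =>
    intro hK
    have hK' : K ≤ d + 1 := by omega
    have hmul : e * (K + 1) = e * K + e := mul_add_one e K
    have hsplit : Finset.Icc 1 (e * (K + 1) + 1) =
        Finset.Icc 1 (e * K + 1) ∪ Finset.Ioc (e * K + 1) (e * (K + 1) + 1) := by
      ext x
      simp only [Finset.mem_Icc, Finset.mem_union, Finset.mem_Ioc]
      omega
    have hdisj : Disjoint (Finset.Icc 1 (e * K + 1)) (Finset.Ioc (e * K + 1) (e * (K + 1) + 1)) := by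
      rw [Finset.disjoint_left]
      intro x hx hx'
      rw [Finset.mem_Icc] at hx
      rw [Finset.mem_Ioc] at hx'
      omega
    -- chunk computation
    have hb := block_filter_card e d r he hre c hc1 hc2 (K + 1) (by omega) (by omega) i hi
    simp only [Nat.add_sub_cancel] at hb
    have hins : Finset.Icc (e * K + 1) (e * (K + 1) + 1) =
        insert (e * K + 1) (Finset.Ioc (e * K + 1) (e * (K + 1) + 1)) :=
      (Finset.Ioc_insert_left (by omega)).symm
    have hfv1 : fval e c (e * K + 1) = c K := by
      have := fval_eq e he c K 0 (by omega)
      simpa using this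
    have hnotmem : (e * K + 1) ∉ (Finset.Ioc (e * K + 1) (e * (K + 1) + 1)).filter
        (fun x => fval e c x = i) := by
      intro h
      have := (Finset.mem_filter.mp h).1
      rw [Finset.mem_Ioc] at this
      omega
    have hchunk : ((Finset.Ioc (e * K + 1) (e * (K + 1) + 1)).filter
        (fun x => fval e c x = i)).card + (if c K = i then 1 else 0) = 1 := by
      rw [hins, Finset.filter_insert, hfv1] at hb
      by_cases h : c K = i
      · rw [if_pos h, Finset.card_insert_of_notMem hnotmem] at hb
        rw [if_pos h]
        omega
      · rw [if_neg h] at hb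
        rw [if_neg h]
        omega
    rw [hsplit, Finset.filter_union, Finset.card_union_of_disjoint
      (Finset.disjoint_filter_filter hdisj), Finset.sum_range_succ]
    have := ih hK'
    omega



lemma exists_seq (r : ℕ) (hr : 2 ≤ r) :
    ∀ n (m : Fin r → ℕ) (j : Fin r), (∑ i, m i) = n → (∀ k, 2 * m k ≤ n + 1) →
      2 * m j ≤ n →
      ∃ L : List (Fin r), L.length = n ∧ (∀ i, L.count i = m i) ∧
        L.Chain' (· ≠ ·) ∧ ∀ x ∈ L.head?, x ≠ j := by
  intro n
  induction n with
  | zero =>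
    intro m j hsum _ _
    refine ⟨[], rfl, fun i => ?_, List.isChain_nil, by simp⟩
    have := (Finset.sum_eq_zero_iff.mp hsum) i (Finset.mem_univ i)
    simp [this]
  | succ n ih =>
    intro m j hsum h2 h3
    -- some element different from j
    have hi₀ : ∃ i₀ : Fin r, i₀ ≠ j := by
      by_cases hj : j = ⟨0, by omega⟩
      · exact ⟨⟨1, by omega⟩, by rw [hj]; intro h; exact absurd (congrArg Fin.val h) (by simp)⟩
      · exact ⟨⟨0, by omega⟩, fun h => hj h.symm⟩
    obtain ⟨i₀, hi₀⟩ := hi₀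
    have hT : (Finset.univ.erase j).Nonempty := ⟨i₀, Finset.mem_erase.mpr ⟨hi₀, Finset.mem_univ _⟩⟩
    obtain ⟨i, hiT, hmax⟩ := Finset.exists_max_image (Finset.univ.erase j) m hT
    have hij : i ≠ j := (Finset.mem_erase.mp hiT).1
    have hsplit : ∑ k ∈ Finset.univ.erase j, m k + m j = n + 1 := by
      rw [Finset.sum_erase_add _ _ (Finset.mem_univ j)]; exact hsum
    have hpos : 1 ≤ m i := by
      by_contra h
      have hz : m i = 0 := by omega
      have : ∑ k ∈ Finset.univ.erase j, m k = 0 :=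
        Finset.sum_eq_zero fun k hk => by
          have := hmax k hk; omega
      omega
    -- the pair sum bound
    have hpair : ∀ k : Fin r, k ≠ i → m i + m k ≤ n + 1 := by
      intro k hk
      have : ({i, k} : Finset (Fin r)).sum m ≤ ∑ x, m x :=
        Finset.sum_le_sum_of_subset (Finset.subset_univ _)
      rwa [Finset.sum_pair (fun h => hk h.symm), hsum] at this
    set m' : Fin r → ℕ := Function.update m i (m i - 1) with hm'
    have hm'i : m' i = m i - 1 := Function.update_self i _ m
    have hm'ne : ∀ k, k ≠ i → m' k = m k := fun k hk => Function.update_of_ne hk _ m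
    have hsum' : ∑ k, m' k = n := by
      have h1 : ∑ k ∈ Finset.univ.erase i, m' k = ∑ k ∈ Finset.univ.erase i, m k :=
        Finset.sum_congr rfl fun k hk => hm'ne k (Finset.mem_erase.mp hk).1
      have h2' : ∑ k ∈ Finset.univ.erase i, m k + m i = n + 1 := by
        rw [Finset.sum_erase_add _ _ (Finset.mem_univ i)]; exact hsum
      have h3' : ∑ k ∈ Finset.univ.erase i, m' k + m' i = ∑ k, m' k := by
        rw [Finset.sum_erase_add _ _ (Finset.mem_univ i)]
      omega
    have h2' : ∀ k, 2 * m' k ≤ n + 1 := by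
      intro k
      by_cases hk : k = i
      · subst hk; rw [hm'i]; have := h2 k; omega
      · rw [hm'ne k hk]
        by_cases hkj : k = j
        · subst hkj; omega
        · have hkT : k ∈ Finset.univ.erase j := Finset.mem_erase.mpr ⟨hkj, Finset.mem_univ _⟩
          have h4 := hmax k hkT
          have h5 := hpair k (fun h => hk h)
          have := h2 k
          omega
    have h3' : 2 * m' i ≤ n := by rw [hm'i]; have := h2 i; omega
    obtain ⟨L', hlen, hcount, hchain, hhead⟩ := ih m' i hsum' h2' h3'
    refine ⟨i :: L', by simp [hlen], fun k => ?_, ?_, ?_⟩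
    · by_cases hk : k = i
      · subst hk
        rw [List.count_cons_self, hcount k, hm'i]; omega
      · rw [List.count_cons_of_ne (Ne.symm hk), hcount k, hm'ne k hk]
    · unfold List.Chain'
      rw [List.isChain_cons]
      exact ⟨fun y hy => (hhead y hy).symm, hchain⟩
    · intro x hx
      simp only [List.head?_cons, Option.mem_def, Option.some.injEq] at hx
      subst hx; exact hij

lemma decomp (e : ℕ) :
    ∀ d x, 1 ≤ x → x ≤ e * (d + 1) + 1 → ∃ k s, k ≤ d ∧ s ≤ e ∧ x = e * k + 1 + s := by
  intro d
  induction d with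
  | zero =>
    intro x h1 h2
    have : e * 1 = e := mul_one e
    exact ⟨0, x - 1, le_rfl, by omega, by simp; omega⟩
  | succ n ih =>
    intro x h1 h2
    by_cases hx : x ≤ e * (n + 1) + 1
    · obtain ⟨k, s, hk, hs, rfl⟩ := ih x h1 hx
      exact ⟨k, s, by omega, hs, rfl⟩
    · have hmul : e * (n + 1 + 1) = e * (n + 1) + e := by ring
      exact ⟨n + 1, x - (e * (n + 1) + 1), le_rfl, by omega, by omega⟩

lemma fval_lt (e d r : ℕ) (he : 1 ≤ e) (hre : r = e + 1) (c : ℕ → ℕ)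
    (hc1 : ∀ k ≤ d + 1, c k < r) (hc2 : ∀ k ≤ d, c k ≠ c (k + 1))
    (x : ℕ) (hx1 : 1 ≤ x) (hx2 : x ≤ e * (d + 1) + 1) : fval e c x < r := by
  obtain ⟨k, s, hk, hs, rfl⟩ := decomp e d x hx1 hx2
  rw [fval_eq e he c k s hs]
  split_ifs with h0 h1
  · exact hc1 k (by omega)
  · exact hc1 (k + 1) (by omega)
  · exact skip2_lt (by omega)

end ColorfulAux

open ColorfulAux in
/-- For `r ≥ 2`, `d ≥ 1`, and nonnegative integers `d₁, …, d_r` with `∑ dᵢ = (r-1)d` and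
`⌊d/2⌋ ≤ dᵢ ≤ d`, there is a colorful partition of `{1, …, (r-1)(d+1)+1}` into `r` parts
`X₁, …, X_r` with `|Xᵢ| = dᵢ + 1`: for every `1 ≤ k ≤ d+1` the block
`Y_k = {(r-1)(k-1)+1, …, (r-1)k+1}` meets each `Xᵢ` in exactly one element. -/
theorem colorful_partition_exists (r d : ℕ) (hr : 2 ≤ r) (hd : 1 ≤ d)
    (D : Fin r → ℕ) (hsum : ∑ i, D i = (r - 1) * d)
    (hlow : ∀ i, d / 2 ≤ D i) (hup : ∀ i, D i ≤ d) :
    ∃ X : Fin r → Finset ℕ,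
      (Pairwise fun i j => Disjoint (X i) (X j)) ∧
      (∀ x : ℕ, x ∈ Finset.Icc 1 ((r - 1) * (d + 1) + 1) ↔ ∃ i, x ∈ X i) ∧
      (∀ i, (X i).card = D i + 1) ∧
      (∀ k : ℕ, 1 ≤ k → k ≤ d + 1 → ∀ i,
        (Finset.Icc ((r - 1) * (k - 1) + 1) ((r - 1) * k + 1) ∩ X i).card = 1) := by
  set e := r - 1 with hed
  have he : 1 ≤ e := by omega
  have hre : r = e + 1 := by omega
  -- multiplicities
  set m : Fin r → ℕ := fun i => d - D i with hm
  have hrd : e * d + d = r * d := by rw [hre]; ring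
  have hmsum : ∑ i, m i = d := by
    have h1 : ∑ i, (m i + D i) = ∑ _i : Fin r, d :=
      Finset.sum_congr rfl fun i _ => by have := hup i; simp only [hm]; omega
    rw [Finset.sum_add_distrib, hsum] at h1
    simp only [Finset.sum_const, Finset.card_univ, Fintype.card_fin, smul_eq_mul] at h1
    omega
  have hm2 : ∀ k, 2 * m k ≤ d + 1 := by
    intro k
    have h1 := hlow k
    have h2 := hup k
    simp only [hm]
    omega
  have hjex : ∃ j : Fin r, d ≤ 2 * D j := by
    by_contra h
    push_neg at h
    have hne : (Finset.univ : Finset (Fin r)).Nonempty := ⟨⟨0, by omega⟩, Finset.mem_univ _⟩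
    have hlt : ∑ i, 2 * D i < ∑ _i : Fin r, d :=
      Finset.sum_lt_sum_of_nonempty hne fun i _ => h i
    rw [← Finset.mul_sum, hsum] at hlt
    simp only [Finset.sum_const, Finset.card_univ, Fintype.card_fin, smul_eq_mul] at hlt
    -- 2 * (e * d) < r * d
    have hed2 : d ≤ e * d := Nat.le_mul_of_pos_left d (by omega)
    have hA : (e + 1) * d = e * d + d := by ring
    omega
  obtain ⟨j, hj⟩ := hjex
  have hm3 : 2 * m j ≤ d := by have := hup j; simp only [hm]; omega
  obtain ⟨L, hLlen, hLcount, hLchain, -⟩ := exists_seq r hr d m j hmsum hm2 hm3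
  set Lv : List ℕ := L.map Fin.val with hLv
  have hLvlen : Lv.length = d := by simp [hLv, hLlen]
  have hLvlt : ∀ x ∈ Lv, x < r := by
    intro x hx
    rw [hLv, List.mem_map] at hx
    obtain ⟨a, -, rfl⟩ := hx
    exact a.isLt
  have hLvcount : ∀ i : Fin r, Lv.count (i : ℕ) = m i := fun i => by
    rw [hLv, List.count_map_of_injective _ _ Fin.val_injective]; exact hLcount i
  have hLvchain : Lv.Chain' (· ≠ ·) :=
    List.isChain_map_of_isChain _ (fun a b hab h => hab (Fin.val_injective h)) hLchain
  have hLvne : Lv ≠ [] := by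
    intro h
    rw [h] at hLvlen
    simp at hLvlen
    omega
  obtain ⟨a0, t0, hLv0⟩ := List.exists_cons_of_ne_nil hLvne
  set c0 : ℕ := if Lv.headI = 0 then 1 else 0 with hc0
  set ce : ℕ := if Lv.getLastI = 0 then 1 else 0 with hce
  set C : List ℕ := c0 :: (Lv ++ [ce]) with hC
  have hClen : C.length = d + 2 := by simp [hC, hLvlen]
  set c : ℕ → ℕ := fun k => C.getD k 0 with hcdef
  have hmemC : ∀ x ∈ C, x < r := by
    intro x hx
    rw [hC] at hx
    simp only [List.mem_cons, List.mem_append, List.mem_singleton, List.not_mem_nil,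
      or_false] at hx
    rcases hx with rfl | hx | rfl
    · rw [hc0]; split_ifs <;> omega
    · exact hLvlt x hx
    · rw [hce]; split_ifs <;> omega
  have hc1 : ∀ k ≤ d + 1, c k < r := by
    intro k hk
    have hlt : k < C.length := by omega
    rw [hcdef]
    simp only
    rw [List.getD_eq_getElem _ _ hlt]
    exact hmemC _ (List.getElem_mem hlt)
  have hCchain : C.Chain' (· ≠ ·) := by
    unfold List.Chain'
    rw [hC, List.isChain_cons]
    constructor
    · intro y hy
      rw [hLv0] at hy
      simp only [List.cons_append, List.head?_cons, Option.mem_def, Option.some.injEq] at hy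
      subst hy
      rw [hc0, hLv0]
      simp only [List.headI_cons]
      by_cases h : a0 = 0 <;> simp [h] <;> omega
    · apply List.IsChain.append hLvchain (List.isChain_singleton ce)
      intro x hx y hy
      simp only [List.head?_cons, Option.mem_def, Option.some.injEq] at hy
      subst hy
      have hxl : Lv.getLastI = x := by
        rw [List.getLastI_eq_getLast?, Option.mem_def.mp hx, Option.getD_some]
      rw [hce, hxl]
      split_ifs with h <;> omega
  have hc2 : ∀ k ≤ d, c k ≠ c (k + 1) := by
    intro k hk
    have h1 : k < C.length - 1 := by omega
    have := List.isChain_iff_getElem.mp hCchain k (by omega)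
    rw [hcdef]
    simp only
    rw [List.getD_eq_getElem _ _ (by omega : k < C.length),
      List.getD_eq_getElem _ _ (by omega : k + 1 < C.length)]
    exact this
  have hc3 : ∀ i : Fin r,
      (∑ k ∈ Finset.range d, if c (k + 1) = (i : ℕ) then 1 else 0) = d - D i := by
    intro i
    have heq : ∀ k < d, c (k + 1) = Lv.getD k 0 := by
      intro k hk
      rw [hcdef]
      simp only
      rw [hC, List.getD_cons_succ, List.getD_append _ _ _ _ (by omega)]
    have hsum2 : (∑ k ∈ Finset.range d, if c (k + 1) = (i : ℕ) then 1 else 0)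
        = ∑ k ∈ Finset.range d, if Lv.getD k 0 = (i : ℕ) then 1 else 0 := by
      apply Finset.sum_congr rfl
      intro k hk
      rw [heq k (Finset.mem_range.mp hk)]
    have h4 := count_aux Lv (i : ℕ)
    rw [hLvlen] at h4
    rw [hsum2, h4, hLvcount i]
  -- the coloring and parts
  set X : Fin r → Finset ℕ :=
    fun i => (Finset.Icc 1 (e * (d + 1) + 1)).filter (fun x => fval e c x = (i : ℕ)) with hX
  have hXsub : ∀ i, X i ⊆ Finset.Icc 1 (e * (d + 1) + 1) := fun i => Finset.filter_subset _ _
  refine ⟨X, ?_, ?_, ?_, ?_⟩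
  · -- pairwise disjoint
    intro i j hij
    rw [Finset.disjoint_left]
    intro x hxi hxj
    rw [hX] at hxi hxj
    have h1 := (Finset.mem_filter.mp hxi).2
    have h2 := (Finset.mem_filter.mp hxj).2
    exact hij (Fin.val_injective (h1 ▸ h2 ▸ rfl))
  · -- cover
    intro x
    constructor
    · intro hx
      have hx' := Finset.mem_Icc.mp hx
      have hlt : fval e c x < r := fval_lt e d r he hre c hc1 hc2 x hx'.1 hx'.2
      refine ⟨⟨fval e c x, hlt⟩, ?_⟩
      rw [hX]
      exact Finset.mem_filter.mpr ⟨hx, rfl⟩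
    · rintro ⟨i, hi⟩
      exact hXsub i hi
  · -- cardinalities
    intro i
    have htot := total_filter_card e d r he hre c hc1 hc2 (i : ℕ) i.isLt
    have hsplit : (∑ k ∈ Finset.range (d + 1), if c k = (i : ℕ) then 1 else 0)
        = (∑ k ∈ Finset.range d, if c (k + 1) = (i : ℕ) then 1 else 0)
          + (if c 0 = (i : ℕ) then 1 else 0) := Finset.sum_range_succ' _ d
    rw [hc3 i] at hsplit
    have hDd := hup i
    rw [hX]
    simp only
    omega
  · -- block intersections
    intro k hk1 hk2 i
    have hbsub : ∀ x ∈ Finset.Icc (e * (k - 1) + 1) (e * k + 1),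
        x ∈ Finset.Icc 1 (e * (d + 1) + 1) := by
      intro x hx
      rw [Finset.mem_Icc] at hx ⊢
      have : e * k ≤ e * (d + 1) := Nat.mul_le_mul_left e hk2
      omega
    have hinter : Finset.Icc (e * (k - 1) + 1) (e * k + 1) ∩ X i
        = (Finset.Icc (e * (k - 1) + 1) (e * k + 1)).filter (fun x => fval e c x = (i : ℕ)) := by
      ext x
      simp only [hX, Finset.mem_inter, Finset.mem_filter]
      constructor
      · rintro ⟨h1, -, h3⟩
        exact ⟨h1, h3⟩
      · rintro ⟨h1, h2⟩
        exact ⟨h1, hbsub x h1, h2⟩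
    rw [hinter]
    exact block_filter_card e d r he hre c hc1 hc2 k hk1 hk2 (i : ℕ) i.isLt
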